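/- Let n ≥ 1 and k ≥ 0 be integers. Then the b-chromatic number of the Kneser graph G_k = KG(2n+k, n) satisfies φ(G_k) ≤ (C(2n+k, n) + 2(2n+k))/3, where C(2n+k, n) = |V(G_k)| is the number of vertices of G_k. -/

import Mathlib

/-- The Kneser graph `KG(n, m)`: vertices are the `m`-element subsets of an
`n`-element set, adjacent iff disjoint. -/
def kneserGraph (n m : ℕ) : SimpleGraph {A : Finset (Fin n) // A.card = m} where
  Adj A B := A ≠ B ∧ Disjoint (A : Finset (Fin n)) (B : Finset (Fin n))
  symm := ⟨fun _ _ h => ⟨h.1.symm, h.2.symm⟩⟩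
  loopless := ⟨fun _ h => h.1 rfl⟩

/-- `f` is a proper coloring of `G`. -/
def IsProperColoring {V α : Type*} (G : SimpleGraph V) (f : V → α) : Prop :=
  ∀ v w : V, G.Adj v w → f v ≠ f w

/-- `v` is color-dominating w.r.t. the coloring `f`: every used color appears
in the closed neighborhood of `v`. -/
def IsColorDominating {V α : Type*} (G : SimpleGraph V) (f : V → α) (v : V) : Prop :=
  ∀ c ∈ Set.range f, f v = c ∨ ∃ w : V, G.Adj v w ∧ f w = c

/-- `f` is a b-coloring of `G`: a proper coloring each of whose color classes
contains a color-dominating vertex. -/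
def IsBColoring {V α : Type*} (G : SimpleGraph V) (f : V → α) : Prop :=
  IsProperColoring G f ∧
    ∀ c ∈ Set.range f, ∃ v : V, f v = c ∧ IsColorDominating G f v

/-- The b-chromatic number of `G`: the largest `k` such that `G` admits a
b-coloring with exactly `k` colors. -/
noncomputable def bChromaticNumber {V : Type*} (G : SimpleGraph V) : ℕ :=
  sSup {k : ℕ | ∃ f : V → Fin k, Function.Surjective f ∧ IsBColoring G f}


set_option maxHeartbeats 1000000 in
open Finset in
private lemma kneser_b_bound {n k : ℕ} (hn : 1 ≤ n) {m : ℕ}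
    (f : {A : Finset (Fin (2 * n + k)) // A.card = n} → Fin m)
    (hsurj : Function.Surjective f)
    (hb : IsBColoring (kneserGraph (2 * n + k) n) f) :
    3 * m ≤ (2 * n + k).choose n + 2 * (2 * n + k) := by
  classical
  let cls : Fin m → Finset {A : Finset (Fin (2 * n + k)) // A.card = n} :=
    fun c => Finset.univ.filter (fun A => f A = c)
  have hmemcls : ∀ (c : Fin m) A, A ∈ cls c ↔ f A = c := by
    intro c A; simp [cls]
  have hcls_ne : ∀ c, (cls c).Nonempty := by
    intro c; obtain ⟨A, hA⟩ := hsurj c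
    exact ⟨A, (hmemcls c A).mpr hA⟩
  let I : Fin m → Finset (Fin (2 * n + k)) :=
    fun c => (cls c).inf (fun A => (A : Finset (Fin (2 * n + k))))
  -- classes at distinct colors have disjoint "cores"
  have hIdisj : ∀ c c', c ≠ c' → Disjoint (I c) (I c') := by
    intro c c' hcc
    obtain ⟨a, ha⟩ := hsurj c
    obtain ⟨v, hv, hvd⟩ := hb.2 c ⟨a, ha⟩
    obtain ⟨a', ha'⟩ := hsurj c'
    rcases hvd c' ⟨a', ha'⟩ with h | ⟨w, hadj, hw⟩
    · exact absurd (hv ▸ h) hcc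
    · have hvm : v ∈ cls c := (hmemcls c v).mpr hv
      have hwm : w ∈ cls c' := (hmemcls c' w).mpr hw
      exact hadj.2.mono (Finset.inf_le hvm) (Finset.inf_le hwm)
  -- small classes have nonempty cores
  have hIne : ∀ c, (cls c).card ≤ 2 → (I c).Nonempty := by
    intro c hc
    have h1 : 1 ≤ (cls c).card := Finset.card_pos.mpr (hcls_ne c)
    rcases Nat.lt_or_ge (cls c).card 2 with h | h
    · have : (cls c).card = 1 := by omega
      obtain ⟨A, hA⟩ := Finset.card_eq_one.mp this
      have hI : I c = (A : Finset (Fin (2 * n + k))) := by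
        simp only [I, hA, Finset.inf_singleton]
      rw [hI]
      exact Finset.card_pos.mp (by rw [A.2]; omega)
    · have : (cls c).card = 2 := le_antisymm hc h
      obtain ⟨A, B, hAB, hABc⟩ := Finset.card_eq_two.mp this
      have hfA : f A = c := (hmemcls c A).mp (by rw [hABc]; simp)
      have hfB : f B = c := (hmemcls c B).mp (by rw [hABc]; simp)
      have hnd : ¬ Disjoint (A : Finset (Fin (2 * n + k))) (B : Finset (Fin (2 * n + k))) := by
        intro hd
        exact hb.1 A B ⟨hAB, hd⟩ (hfA.trans hfB.symm)
      obtain ⟨x, hxA, hxB⟩ := Finset.not_disjoint_iff.mp hnd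
      refine ⟨x, ?_⟩
      have hI : I c = (A : Finset (Fin (2 * n + k))) ⊓ (B : Finset (Fin (2 * n + k))) := by
        simp only [I, hABc, Finset.inf_insert, Finset.inf_singleton]
      rw [hI]
      exact Finset.mem_inter.mpr ⟨hxA, hxB⟩
  -- injection from small classes into the ground set
  have hNpos : 0 < 2 * n + k := by omega
  let e : Fin m → Fin (2 * n + k) := fun c =>
    if h : (I c).Nonempty then h.choose else ⟨0, hNpos⟩
  have he_mem : ∀ c, (h : (I c).Nonempty) → e c ∈ I c := by
    intro c h
    simp only [e, dif_pos h]
    exact h.choose_spec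
  let T : Finset (Fin m) := Finset.univ.filter (fun c => (cls c).card ≤ 2)
  have hT : T.card ≤ 2 * n + k := by
    have hle := Finset.card_le_card_of_injOn e
      (fun a _ => Finset.mem_univ (e a)) (s := T) ?_
    · simpa using hle
    · intro c hc c' hc' hee
      by_contra hne
      have h1 : (I c).Nonempty := hIne c (by simpa [T] using hc)
      have h2 : (I c').Nonempty := hIne c' (by simpa [T] using hc')
      have := Finset.disjoint_left.mp (hIdisj c c' hne) (he_mem c h1)
      exact this (hee ▸ he_mem c' h2)
  -- counting
  have hcard : (2 * n + k).choose n = ∑ c : Fin m, (cls c).card := by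
    have h1 : (Finset.univ : Finset {A : Finset (Fin (2 * n + k)) // A.card = n}).card
        = ∑ c ∈ Finset.univ,
          ((Finset.univ : Finset {A : Finset (Fin (2 * n + k)) // A.card = n}).filter
            (fun A => f A = c)).card :=
      Finset.card_eq_sum_card_fiberwise (fun x _ => Finset.mem_univ (f x))
    have h2 : (Finset.univ : Finset {A : Finset (Fin (2 * n + k)) // A.card = n}).card
        = (2 * n + k).choose n := by
      rw [Finset.card_univ, Fintype.card_finset_len, Fintype.card_fin]
    rw [← h2, h1]
  let pen : Fin m → ℕ := fun c => if (cls c).card ≤ 2 then 3 - (cls c).card else 0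
  have hpen : ∑ c : Fin m, pen c ≤ 2 * (2 * n + k) := by
    calc ∑ c : Fin m, pen c ≤ ∑ c : Fin m, (if (cls c).card ≤ 2 then 2 else 0) := by
          refine Finset.sum_le_sum fun c _ => ?_
          have h1 : 1 ≤ (cls c).card := Finset.card_pos.mpr (hcls_ne c)
          dsimp only [pen]; split <;> omega
      _ = 2 * T.card := by
          rw [Finset.sum_ite, Finset.sum_const, Finset.sum_const]
          simp [T, mul_comm]
      _ ≤ 2 * (2 * n + k) := by omega
  calc 3 * m = ∑ _c : Fin m, 3 := by
        simp [Finset.sum_const, Finset.card_univ, mul_comm]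
    _ ≤ ∑ c : Fin m, ((cls c).card + pen c) := by
        refine Finset.sum_le_sum fun c _ => ?_
        have h1 : 1 ≤ (cls c).card := Finset.card_pos.mpr (hcls_ne c)
        dsimp only [pen]; split <;> omega
    _ = (2 * n + k).choose n + ∑ c : Fin m, pen c := by
        rw [Finset.sum_add_distrib, ← hcard]
    _ ≤ (2 * n + k).choose n + 2 * (2 * n + k) := by omega

/-- The b-chromatic number of the Kneser graph `G_k = KG(2n+k, n)` is at most
`(C(2n+k, n) + 2(2n+k)) / 3`. -/
theorem bChromaticNumber_kneser_le {n k : ℕ} (hn : 1 ≤ n) :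
    (bChromaticNumber (kneserGraph (2 * n + k) n) : ℝ) ≤
      (((2 * n + k).choose n : ℝ) + 2 * (2 * n + k)) / 3 := by
  have hb3 : bChromaticNumber (kneserGraph (2 * n + k) n)
      ≤ ((2 * n + k).choose n + 2 * (2 * n + k)) / 3 := by
    apply csSup_le'
    rintro mm ⟨f, hs, hbc⟩
    rw [Nat.le_div_iff_mul_le (by norm_num)]
    have := kneser_b_bound hn f hs hbc
    omega
  calc (bChromaticNumber (kneserGraph (2 * n + k) n) : ℝ)
      ≤ ((((2 * n + k).choose n + 2 * (2 * n + k)) / 3 : ℕ) : ℝ) := Nat.cast_le.mpr hb3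
    _ ≤ _ := by
        refine le_trans Nat.cast_div_le ?_
        push_cast
        ring_nf
        exact le_rfl
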